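/- For a stopping-time POMDP with value function V on the belief simplex satisfying the Bellman equation V(π) = min{ C_f·π , C_d·π + Σ_y V(T(π,y)) σ(π,y) }, where T(π,y) is the Bayes belief update and σ(π,y) its normalizing constant, the stopping region R_1 = {π : C_f·π ≤ C_d·π + Σ_y V(T(π,y)) σ(π,y)} is a convex subset of the belief simplex, provided V is concave on the simplex. -/

import Mathlib

open Finset

/-- Normalizing constant of the Bayes belief update: σ(π,y) = 1ᵀ Bᵧ Pᵀ π. -/
noncomputable def bSigma {S Y : Type*} [Fintype S] (B : Y → S → ℝ) (P : S → S → ℝ)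
    (π : S → ℝ) (y : Y) : ℝ :=
  ∑ j, B y j * ∑ i, π i * P i j

/-- Bayes belief update T(π,y) = Bᵧ Pᵀ π / (1ᵀ Bᵧ Pᵀ π). -/
noncomputable def bayesT {S Y : Type*} [Fintype S] (B : Y → S → ℝ) (P : S → S → ℝ)
    (π : S → ℝ) (y : Y) : S → ℝ :=
  fun j => B y j * (∑ i, π i * P i j) / bSigma B P π y

section Aux

variable {S Y : Type*} [Fintype S]

lemma num_nonneg (B : Y → S → ℝ) (hB : ∀ y j, 0 ≤ B y j)
    (P : S → S → ℝ) (hPnn : ∀ i j, 0 ≤ P i j) (π : S → ℝ) (hπ : ∀ i, 0 ≤ π i)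
    (y : Y) (j : S) : 0 ≤ B y j * ∑ i, π i * P i j :=
  mul_nonneg (hB y j) (Finset.sum_nonneg fun i _ => mul_nonneg (hπ i) (hPnn i j))

lemma bSigma_nonneg (B : Y → S → ℝ) (hB : ∀ y j, 0 ≤ B y j)
    (P : S → S → ℝ) (hPnn : ∀ i j, 0 ≤ P i j) (π : S → ℝ) (hπ : ∀ i, 0 ≤ π i)
    (y : Y) : 0 ≤ bSigma B P π y :=
  Finset.sum_nonneg fun j _ => num_nonneg B hB P hPnn π hπ y j

lemma num_eq_zero (B : Y → S → ℝ) (hB : ∀ y j, 0 ≤ B y j)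
    (P : S → S → ℝ) (hPnn : ∀ i j, 0 ≤ P i j) (π : S → ℝ) (hπ : ∀ i, 0 ≤ π i)
    (y : Y) (hσ : bSigma B P π y = 0) (j : S) : B y j * ∑ i, π i * P i j = 0 := by
  have := (Finset.sum_eq_zero_iff_of_nonneg
    (fun j _ => num_nonneg B hB P hPnn π hπ y j)).mp hσ
  exact this j (Finset.mem_univ j)

lemma num_smul_add (B : Y → S → ℝ) (P : S → S → ℝ) (a b : ℝ) (π₁ π₂ : S → ℝ)
    (y : Y) (j : S) :
    B y j * ∑ i, (a • π₁ + b • π₂) i * P i j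
      = a * (B y j * ∑ i, π₁ i * P i j) + b * (B y j * ∑ i, π₂ i * P i j) := by
  simp only [Pi.add_apply, Pi.smul_apply, smul_eq_mul, add_mul, Finset.sum_add_distrib,
    Finset.mul_sum, mul_add]
  congr 1 <;> exact Finset.sum_congr rfl fun i _ => by ring

lemma bSigma_smul_add (B : Y → S → ℝ) (P : S → S → ℝ) (a b : ℝ) (π₁ π₂ : S → ℝ)
    (y : Y) :
    bSigma B P (a • π₁ + b • π₂) y = a * bSigma B P π₁ y + b * bSigma B P π₂ y := by
  unfold bSigma
  rw [Finset.mul_sum, Finset.mul_sum, ← Finset.sum_add_distrib]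
  exact Finset.sum_congr rfl fun j _ => num_smul_add B P a b π₁ π₂ y j

lemma bayesT_mem (B : Y → S → ℝ) (hB : ∀ y j, 0 ≤ B y j)
    (P : S → S → ℝ) (hPnn : ∀ i j, 0 ≤ P i j) (π : S → ℝ) (hπ : ∀ i, 0 ≤ π i)
    (y : Y) (hσ : 0 < bSigma B P π y) : bayesT B P π y ∈ stdSimplex ℝ S := by
  constructor
  · intro j
    exact div_nonneg (num_nonneg B hB P hPnn π hπ y j) hσ.le
  · unfold bayesT
    rw [← Finset.sum_div]
    exact div_self hσ.ne'

/-- Key concavity step: for each observation y, π ↦ V(T(π,y))·σ(π,y) is concave. -/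
lemma key_step (B : Y → S → ℝ) (hB : ∀ y j, 0 ≤ B y j)
    (P : S → S → ℝ) (hPnn : ∀ i j, 0 ≤ P i j)
    (V : (S → ℝ) → ℝ) (hVconc : ConcaveOn ℝ (stdSimplex ℝ S) V)
    (π₁ π₂ : S → ℝ) (h₁ : π₁ ∈ stdSimplex ℝ S) (h₂ : π₂ ∈ stdSimplex ℝ S)
    (a b : ℝ) (ha : 0 ≤ a) (hb : 0 ≤ b) (hab : a + b = 1) (y : Y) :
    a * (V (bayesT B P π₁ y) * bSigma B P π₁ y)
      + b * (V (bayesT B P π₂ y) * bSigma B P π₂ y)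
      ≤ V (bayesT B P (a • π₁ + b • π₂) y) * bSigma B P (a • π₁ + b • π₂) y := by
  have hπ₁ : ∀ i, 0 ≤ π₁ i := h₁.1
  have hπ₂ : ∀ i, 0 ≤ π₂ i := h₂.1
  set σ₁ := bSigma B P π₁ y with hσ₁def
  set σ₂ := bSigma B P π₂ y with hσ₂def
  have hσ₁ : 0 ≤ σ₁ := bSigma_nonneg B hB P hPnn π₁ hπ₁ y
  have hσ₂ : 0 ≤ σ₂ := bSigma_nonneg B hB P hPnn π₂ hπ₂ y
  have hlin : bSigma B P (a • π₁ + b • π₂) y = a * σ₁ + b * σ₂ :=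
    bSigma_smul_add B P a b π₁ π₂ y
  rcases eq_or_lt_of_le (add_nonneg (mul_nonneg ha hσ₁) (mul_nonneg hb hσ₂))
    with hz | hpos
  · -- total normalizer is zero
    have h1 : a * σ₁ = 0 := by nlinarith [mul_nonneg ha hσ₁, mul_nonneg hb hσ₂]
    have h2 : b * σ₂ = 0 := by nlinarith [mul_nonneg ha hσ₁, mul_nonneg hb hσ₂]
    rw [hlin, ← hz, mul_zero]
    have e1 : a * (V (bayesT B P π₁ y) * σ₁) = 0 := by
      rw [mul_comm (V _), ← mul_assoc, h1, zero_mul]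
    have e2 : b * (V (bayesT B P π₂ y) * σ₂) = 0 := by
      rw [mul_comm (V _), ← mul_assoc, h2, zero_mul]
    rw [e1, e2, add_zero]
  · -- total normalizer positive
    rcases eq_or_lt_of_le hσ₁ with hσ₁z | hσ₁p
    · -- σ₁ = 0, so the first term vanishes and T(comb) = T(π₂)
      have hb' : 0 < b * σ₂ := by nlinarith
      have hbpos : 0 < b := by
        rcases lt_or_eq_of_le hb with h | h
        · exact h
        · exfalso; rw [← h, zero_mul] at hb'; exact lt_irrefl 0 hb'
      have hσ₂p : 0 < σ₂ := by nlinarith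
      have hTeq : bayesT B P (a • π₁ + b • π₂) y = bayesT B P π₂ y := by
        funext j
        unfold bayesT
        rw [hlin, num_smul_add B P a b π₁ π₂ y j,
          num_eq_zero B hB P hPnn π₁ hπ₁ y hσ₁z.symm j]
        show (a * 0 + b * (B y j * ∑ i, π₂ i * P i j)) / (a * σ₁ + b * σ₂)
            = B y j * (∑ i, π₂ i * P i j) / σ₂
        rw [← hσ₁z]
        simp only [mul_zero, zero_add]
        exact mul_div_mul_left _ _ hbpos.ne'
      rw [hTeq, hlin, ← hσ₁z]
      exact le_of_eq (by ring)
    · rcases eq_or_lt_of_le hσ₂ with hσ₂z | hσ₂p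
      · -- σ₂ = 0, symmetric
        have ha' : 0 < a * σ₁ := by nlinarith
        have hapos : 0 < a := by
          rcases lt_or_eq_of_le ha with h | h
          · exact h
          · exfalso; rw [← h, zero_mul] at ha'; exact lt_irrefl 0 ha'
        have hTeq : bayesT B P (a • π₁ + b • π₂) y = bayesT B P π₁ y := by
          funext j
          unfold bayesT
          rw [hlin, num_smul_add B P a b π₁ π₂ y j,
            num_eq_zero B hB P hPnn π₂ hπ₂ y hσ₂z.symm j]
          show (a * (B y j * ∑ i, π₁ i * P i j) + b * 0) / (a * σ₁ + b * σ₂)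
              = B y j * (∑ i, π₁ i * P i j) / σ₁
          rw [← hσ₂z]
          simp only [mul_zero, add_zero]
          exact mul_div_mul_left _ _ hapos.ne'
        rw [hTeq, hlin, ← hσ₂z]
        exact le_of_eq (by ring)
      · -- both positive: genuine concavity
        set σ := a * σ₁ + b * σ₂ with hσdef
        have hσne : σ ≠ 0 := hpos.ne'
        have hT₁ := bayesT_mem B hB P hPnn π₁ hπ₁ y hσ₁p
        have hT₂ := bayesT_mem B hB P hPnn π₂ hπ₂ y hσ₂p
        have hw₁ : 0 ≤ a * σ₁ / σ := div_nonneg (mul_nonneg ha hσ₁) hpos.le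
        have hw₂ : 0 ≤ b * σ₂ / σ := div_nonneg (mul_nonneg hb hσ₂) hpos.le
        have hwsum : a * σ₁ / σ + b * σ₂ / σ = 1 := by
          field_simp
          exact hσdef.symm
        have hTeq : (a * σ₁ / σ) • bayesT B P π₁ y + (b * σ₂ / σ) • bayesT B P π₂ y
            = bayesT B P (a • π₁ + b • π₂) y := by
          funext j
          simp only [Pi.add_apply, Pi.smul_apply, smul_eq_mul]
          unfold bayesT
          rw [hlin, num_smul_add B P a b π₁ π₂ y j]
          rw [← hσ₁def, ← hσ₂def]
          have := hσ₁p.ne'; have := hσ₂p.ne'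
          field_simp
        have hconc := hVconc.2 hT₁ hT₂ hw₁ hw₂ hwsum
        rw [hTeq] at hconc
        simp only [smul_eq_mul] at hconc
        have := mul_le_mul_of_nonneg_right hconc hpos.le
        rw [hlin]
        calc a * (V (bayesT B P π₁ y) * σ₁) + b * (V (bayesT B P π₂ y) * σ₂)
            = (a * σ₁ / σ * V (bayesT B P π₁ y) + b * σ₂ / σ * V (bayesT B P π₂ y)) * σ := by
              field_simp
          _ ≤ V (bayesT B P (a • π₁ + b • π₂) y) * σ := this

end Aux

/-- The stopping region R₁ of a stopping-time POMDP whose value function satisfies the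
Bellman equation is convex, provided the value function is concave on the belief simplex. -/
theorem stmt0 {S Y : Type*} [Fintype S] [Fintype Y]
    (B : Y → S → ℝ) (hB : ∀ y j, 0 ≤ B y j)
    (P : S → S → ℝ) (hPnn : ∀ i j, 0 ≤ P i j) (hProw : ∀ i, ∑ j, P i j = 1)
    (Cf Cd : S → ℝ)
    (V : (S → ℝ) → ℝ)
    (hVconc : ConcaveOn ℝ (stdSimplex ℝ S) V)
    (hBellman : ∀ π ∈ stdSimplex ℝ S,
      V π = min (∑ x, Cf x * π x)
        ((∑ x, Cd x * π x) + ∑ y, V (bayesT B P π y) * bSigma B P π y)) :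
    Convex ℝ {π ∈ stdSimplex ℝ S |
      (∑ x, Cf x * π x) ≤ (∑ x, Cd x * π x) + ∑ y, V (bayesT B P π y) * bSigma B P π y} := by
  rintro π₁ ⟨h₁s, h₁⟩ π₂ ⟨h₂s, h₂⟩ a b ha hb hab
  refine ⟨(convex_stdSimplex ℝ S) h₁s h₂s ha hb hab, ?_⟩
  have hCf : ∑ x, Cf x * (a • π₁ + b • π₂) x
      = a * ∑ x, Cf x * π₁ x + b * ∑ x, Cf x * π₂ x := by
    simp only [Pi.add_apply, Pi.smul_apply, smul_eq_mul, mul_add, Finset.sum_add_distrib,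
      Finset.mul_sum]
    congr 1 <;> exact Finset.sum_congr rfl fun x _ => by ring
  have hCd : ∑ x, Cd x * (a • π₁ + b • π₂) x
      = a * ∑ x, Cd x * π₁ x + b * ∑ x, Cd x * π₂ x := by
    simp only [Pi.add_apply, Pi.smul_apply, smul_eq_mul, mul_add, Finset.sum_add_distrib,
      Finset.mul_sum]
    congr 1 <;> exact Finset.sum_congr rfl fun x _ => by ring
  have hsum : a * (∑ y, V (bayesT B P π₁ y) * bSigma B P π₁ y)
      + b * (∑ y, V (bayesT B P π₂ y) * bSigma B P π₂ y)
      ≤ ∑ y, V (bayesT B P (a • π₁ + b • π₂) y) * bSigma B P (a • π₁ + b • π₂) y := by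
    rw [Finset.mul_sum, Finset.mul_sum, ← Finset.sum_add_distrib]
    exact Finset.sum_le_sum fun y _ =>
      key_step B hB P hPnn V hVconc π₁ π₂ h₁s h₂s a b ha hb hab y
  calc ∑ x, Cf x * (a • π₁ + b • π₂) x
      = a * ∑ x, Cf x * π₁ x + b * ∑ x, Cf x * π₂ x := hCf
    _ ≤ a * ((∑ x, Cd x * π₁ x) + ∑ y, V (bayesT B P π₁ y) * bSigma B P π₁ y)
        + b * ((∑ x, Cd x * π₂ x) + ∑ y, V (bayesT B P π₂ y) * bSigma B P π₂ y) := by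
        exact add_le_add (mul_le_mul_of_nonneg_left h₁ ha) (mul_le_mul_of_nonneg_left h₂ hb)
    _ = (a * ∑ x, Cd x * π₁ x + b * ∑ x, Cd x * π₂ x)
        + (a * (∑ y, V (bayesT B P π₁ y) * bSigma B P π₁ y)
          + b * (∑ y, V (bayesT B P π₂ y) * bSigma B P π₂ y)) := by ring
    _ ≤ (∑ x, Cd x * (a • π₁ + b • π₂) x)
        + ∑ y, V (bayesT B P (a • π₁ + b • π₂) y) * bSigma B P (a • π₁ + b • π₂) y := by
        rw [hCd]; exact add_le_add_right hsum _
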